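/- arXiv:2002.01717 — 4 statements merged into one kernel-verified Lean document; each statement's English description precedes it below -/
import Mathlib

section
/- (Casimir conditions for in-domain actuated systems, Stokes–Dirac setting.) Let L > 0, P₁ ∈ ℝ^{n×n} symmetric, P₀ ∈ ℝ^{n×n} skew-symmetric, G₀ ∈ ℝ^{n×n} symmetric positive semidefinite, Q : [0,L] → ℝ^{n×n} continuously differentiable with Q(z) symmetric for all z, and B : [0,L] → ℝ^{n×m} continuous. Let A_c ∈ ℝ^{n_c×n_c} be skew-symmetric, S_c ∈ ℝ^{n_c×n_c} symmetric positive semidefinite, Q_c ∈ ℝ^{n_c×n_c} symmetric positive definite, and B_c ∈ ℝ^{n_c×m}. Suppose χ : ℝ × [0,L] → ℝⁿ (continuously differentiable) and v_c : ℝ → ℝ^{n_c} (differentiable) solve the closed-loop system ∂_t χ = P₁ ∂_z(Qχ) + (P₀ − G₀)Qχ + B(z)u(t), dv_c/dt = (A_c − S_c)Q_c v_c + B_c u_c(t), with power-conserving interconnection u(t) = −B_cᵀ Q_c v_c(t) and u_c(t) = ∫₀ᴸ B(z)ᵀ Q(z) χ(z,t) dz. Let Γ ∈ ℝ^{n_c}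 and Ψ : [0,L] → ℝⁿ be continuously differentiable and satisfy: (i) (A_c + S_c)Γ = 0; (ii) P₁ Ψ'(z) + (P₀ + G₀)Ψ(z) − B(z)B_cᵀ Γ = 0 for all z ∈ [0,L]; (iii) B_c B(z)ᵀ Ψ(z) = 0 for all z ∈ [0,L]; (iv) Ψ(L)ᵀ P₁ Q(L)χ(L,t) − Ψ(0)ᵀ P₁ Q(0)χ(0,t) = 0 for all t. Then the functional C(t) := Γᵀ v_c(t) + ∫₀ᴸ Ψ(z)ᵀ χ(z,t) dz is constant in t, i.e. C is a structural invariant (Casimir function) of the closed loop. -/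
open Matrix MeasureTheory intervalIntegral

lemma hasDerivAt_dot {n : ℕ} {f g : ℝ → Fin n → ℝ} {f' g' : Fin n → ℝ} {x : ℝ}
    (hf : HasDerivAt f f' x) (hg : HasDerivAt g g' x) :
    HasDerivAt (fun x => f x ⬝ᵥ g x) (f' ⬝ᵥ g x + f x ⬝ᵥ g') x := by
  simp only [dotProduct, Finset.sum_add_distrib.symm]

  exact HasDerivAt.fun_sum fun i _ =>
    ((hasDerivAt_pi.mp hf i).mul (hasDerivAt_pi.mp hg i))

lemma hasDerivAt_mulVec {n m : ℕ} (A : Matrix (Fin n) (Fin m) ℝ) {f : ℝ → Fin m → ℝ}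
    {f' : Fin m → ℝ} {x : ℝ} (hf : HasDerivAt f f' x) :
    HasDerivAt (fun x => A *ᵥ f x) (A *ᵥ f') x := by
  refine hasDerivAt_pi.mpr fun i => ?_
  simp only [Matrix.mulVec, dotProduct]
  exact HasDerivAt.fun_sum fun j _ => (hasDerivAt_pi.mp hf j).const_mul _

lemma hasDerivAt_dotConst {n : ℕ} (c : Fin n → ℝ) {f : ℝ → Fin n → ℝ}
    {f' : Fin n → ℝ} {x : ℝ} (hf : HasDerivAt f f' x) :
    HasDerivAt (fun x => c ⬝ᵥ f x) (c ⬝ᵥ f') x := by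
  simp only [dotProduct]
  exact HasDerivAt.fun_sum fun i _ => (hasDerivAt_pi.mp hf i).const_mul _

-- continuity of deriv of C¹ pi-valued function
lemma continuous_deriv_of_contDiff {E : Type*} [NormedAddCommGroup E] [NormedSpace ℝ E]
    {f : ℝ → E} (hf : ContDiff ℝ 1 f) : Continuous (deriv f) := by
  have h := (contDiff_one_iff_fderiv.mp hf).2
  have : deriv f = fun x => fderiv ℝ f x 1 := by
    funext x; rw [fderiv_apply_one_eq_deriv]
  rw [this]
  exact (ContinuousLinearMap.apply ℝ E (1:ℝ)).continuous.comp h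

lemma dot_shift {n k : ℕ} (M : Matrix (Fin n) (Fin k) ℝ) (a : Fin k → ℝ) (b : Fin n → ℝ) :
    (M *ᵥ a) ⬝ᵥ b = a ⬝ᵥ (Mᵀ *ᵥ b) := by
  rw [dotProduct_comm, Matrix.dotProduct_mulVec, ← Matrix.mulVec_transpose,
    dotProduct_comm]

/-- Casimir conditions for in-domain actuated systems (Stokes–Dirac setting):
under conditions (i)–(iv), the functional
`C(t) = Γᵀ v_c(t) + ∫₀ᴸ Ψᵀ χ dz` is a structural invariant of the closed loop. -/
theorem stmt_4 (n m nc : ℕ) (L : ℝ) (hL : 0 < L)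
    (P₁ P₀ G₀ : Matrix (Fin n) (Fin n) ℝ)
    (hP₁ : P₁.IsSymm) (hP₀ : P₀ᵀ = -P₀) (hG₀ : G₀.PosSemidef)
    (Q : ℝ → Matrix (Fin n) (Fin n) ℝ)
    (hQdiff : ∀ i j, ContDiff ℝ 1 fun z => Q z i j)
    (hQsym : ∀ z, (Q z).IsSymm)
    (B : ℝ → Matrix (Fin n) (Fin m) ℝ)
    (hB : ∀ i j, Continuous fun z => B z i j)
    (Ac Sc Qc : Matrix (Fin nc) (Fin nc) ℝ)
    (hAc : Acᵀ = -Ac) (hSc : Sc.PosSemidef) (hQc : Qc.PosDef)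
    (Bc : Matrix (Fin nc) (Fin m) ℝ)
    (χ : ℝ → ℝ → Fin n → ℝ)   -- plant state, χ t z
    (hχ : ContDiff ℝ 1 (Function.uncurry χ))
    (vc : ℝ → Fin nc → ℝ)     -- controller state
    -- power-conserving interconnection u = −B_cᵀ Q_c v_c, u_c = ∫₀ᴸ Bᵀ Q χ dz
    (u : ℝ → Fin m → ℝ) (hu : ∀ t, u t = -(Bcᵀ.mulVec (Qc.mulVec (vc t))))
    (uc : ℝ → Fin m → ℝ)
    (huc : ∀ t, uc t = ∫ z in (0 : ℝ)..L, (B z)ᵀ.mulVec ((Q z).mulVec (χ t z)))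
    -- closed-loop dynamics
    (hpde : ∀ t : ℝ, ∀ z ∈ Set.Icc (0 : ℝ) L,
      HasDerivAt (fun τ => χ τ z)
        (P₁.mulVec (deriv (fun ζ => (Q ζ).mulVec (χ t ζ)) z)
          + (P₀ - G₀).mulVec ((Q z).mulVec (χ t z))
          + (B z).mulVec (u t)) t)
    (hctrl : ∀ t : ℝ,
      HasDerivAt vc ((Ac - Sc).mulVec (Qc.mulVec (vc t)) + Bc.mulVec (uc t)) t)
    (Γ : Fin nc → ℝ) (Ψ : ℝ → Fin n → ℝ) (hΨ : ContDiff ℝ 1 Ψ)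
    -- (i) (A_c + S_c)Γ = 0
    (hi : (Ac + Sc).mulVec Γ = 0)
    -- (ii) P₁ Ψ' + (P₀ + G₀)Ψ − B B_cᵀ Γ = 0 on [0,L]
    (hii : ∀ z ∈ Set.Icc (0 : ℝ) L,
      P₁.mulVec (deriv Ψ z) + (P₀ + G₀).mulVec (Ψ z) - (B z * Bcᵀ).mulVec Γ = 0)
    -- (iii) B_c Bᵀ Ψ = 0 on [0,L]
    (hiii : ∀ z ∈ Set.Icc (0 : ℝ) L, Bc.mulVec ((B z)ᵀ.mulVec (Ψ z)) = 0)
    -- (iv) boundary condition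
    (hiv : ∀ t : ℝ,
      Ψ L ⬝ᵥ P₁.mulVec ((Q L).mulVec (χ t L))
        - Ψ 0 ⬝ᵥ P₁.mulVec ((Q 0).mulVec (χ t 0)) = 0)
    (C : ℝ → ℝ)
    (hC : ∀ t, C t = Γ ⬝ᵥ vc t + ∫ z in (0 : ℝ)..L, Ψ z ⬝ᵥ χ t z) :
    ∀ t₁ t₂ : ℝ, C t₁ = C t₂ := by
  have hG₀T : G₀ᵀ = G₀ := by simpa using hG₀.1.eq
  have hScT : Scᵀ = Sc := by simpa using hSc.1.eq
  set X := Function.uncurry χ with hX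
  have hXd : Differentiable ℝ X := hχ.differentiable one_ne_zero
  have hfc : Continuous (fderiv ℝ X) := (contDiff_one_iff_fderiv.mp hχ).2
  set Dt : ℝ → ℝ → Fin n → ℝ := fun t z => fderiv ℝ X (t, z) ((1 : ℝ), (0 : ℝ)) with hDt
  have hDtd : ∀ t z, HasDerivAt (fun τ => χ τ z) (Dt t z) t := by
    intro t z
    have h1 : HasDerivAt (fun τ : ℝ => (τ, z)) ((1 : ℝ), (0 : ℝ)) t :=
      (hasDerivAt_id t).prodMk (hasDerivAt_const t z)
    exact (hXd (t, z)).hasFDerivAt.comp_hasDerivAt t h1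
  have hDtc : Continuous fun p : ℝ × ℝ => Dt p.1 p.2 :=
    (ContinuousLinearMap.apply ℝ (Fin n → ℝ) ((1 : ℝ), (0 : ℝ))).continuous.comp hfc
  have hΨc : Continuous Ψ := hΨ.continuous
  have hχc : Continuous X := hχ.continuous
  have hχz : ∀ t : ℝ, Continuous fun z => χ t z := fun t =>
    hχc.comp (continuous_const.prodMk continuous_id)
  have hDteq : ∀ t : ℝ, ∀ z ∈ Set.Icc (0 : ℝ) L,
      Dt t z = P₁.mulVec (deriv (fun ζ => (Q ζ).mulVec (χ t ζ)) z)
          + (P₀ - G₀).mulVec ((Q z).mulVec (χ t z))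
          + (B z).mulVec (u t) := fun t z hz => (hDtd t z).unique (hpde t z hz)
  -- derivative of integral term
  have hDtz : ∀ t : ℝ, Continuous fun z => Dt t z := fun t =>
    hDtc.comp (continuous_const.prodMk continuous_id)
  have hi1 : ∀ t : ℝ, HasDerivAt (fun x => ∫ z in (0 : ℝ)..L, Ψ z ⬝ᵥ χ x z)
      (∫ z in (0 : ℝ)..L, Ψ z ⬝ᵥ Dt t z) t := by
    intro t
    have hK : IsCompact ((Set.Icc (t - 1) (t + 1)) ×ˢ (Set.Icc (0 : ℝ) L)) :=
      isCompact_Icc.prod isCompact_Icc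
    have hFc : Continuous fun p : ℝ × ℝ => Ψ p.2 ⬝ᵥ Dt p.1 p.2 :=
      (hΨc.comp continuous_snd).dotProduct hDtc
    obtain ⟨M, hM⟩ := hK.exists_bound_of_continuousOn hFc.continuousOn
    refine (intervalIntegral.hasDerivAt_integral_of_dominated_loc_of_deriv_le
        (F' := fun x z => Ψ z ⬝ᵥ Dt x z) (bound := fun _ => M) (Metric.ball_mem_nhds t one_pos)
        (Filter.Eventually.of_forall fun x =>
          (hΨc.dotProduct (hχz x)).aestronglyMeasurable)
        ((hΨc.dotProduct (hχz t)).intervalIntegrable 0 L)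
        ((hΨc.dotProduct (hDtz t)).aestronglyMeasurable)
        (MeasureTheory.ae_of_all _ fun z hz x hx => ?_)
        intervalIntegrable_const
        (MeasureTheory.ae_of_all _ fun z hz x hx =>
          hasDerivAt_dotConst (Ψ z) (hDtd x z))).2
    have hzI : z ∈ Set.Icc (0 : ℝ) L :=
      Set.Ioc_subset_Icc_self (by rwa [Set.uIoc_of_le hL.le] at hz)
    have hd := Metric.mem_ball.mp hx
    rw [Real.dist_eq] at hd
    have hd' := abs_lt.mp hd
    have hxI : x ∈ Set.Icc (t - 1) (t + 1) := ⟨by linarith [hd'.1], by linarith [hd'.2]⟩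
    exact hM (x, z) ⟨hxI, hzI⟩
  -- value of the derivative of the integral term
  have hΨ'c : Continuous (deriv Ψ) := continuous_deriv_of_contDiff hΨ
  have hBmat : Continuous B := continuous_matrix fun i j => hB i j
  have hi2 : ∀ t : ℝ, (∫ z in (0 : ℝ)..L, Ψ z ⬝ᵥ Dt t z) = -(Γ ⬝ᵥ Bc *ᵥ uc t) := by
    intro t
    set φ : ℝ → Fin n → ℝ := fun ζ => Q ζ *ᵥ χ t ζ with hφdef
    have hφcd : ContDiff ℝ 1 φ := by
      apply contDiff_pi.mpr
      intro i
      have hχt : ContDiff ℝ 1 fun ζ => χ t ζ := hχ.comp (contDiff_const.prodMk contDiff_id)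
      have he : (fun ζ => φ ζ i) = fun ζ => ∑ j, Q ζ i j * χ t ζ j := by
        funext ζ; simp [hφdef, Matrix.mulVec, dotProduct]
      rw [he]
      exact ContDiff.sum fun j _ => (hQdiff i j).mul (contDiff_pi.mp hχt j)
    have hφd : ∀ z, HasDerivAt φ (deriv φ z) z := fun z =>
      ((hφcd.differentiable one_ne_zero) z).hasDerivAt
    have hφ'c : Continuous (deriv φ) := continuous_deriv_of_contDiff hφcd
    have hφc : Continuous φ := hφcd.continuous
    set ψ : ℝ → Fin n → ℝ := fun z => P₁ *ᵥ Ψ z with hψdef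
    have hψd : ∀ z, HasDerivAt ψ (P₁ *ᵥ deriv Ψ z) z := fun z =>
      hasDerivAt_mulVec P₁ ((hΨ.differentiable one_ne_zero z).hasDerivAt)
    have hψc : Continuous ψ := continuous_const.matrix_mulVec hΨc
    have hder : ∀ z, HasDerivAt (fun z => ψ z ⬝ᵥ φ z)
        ((P₁ *ᵥ deriv Ψ z) ⬝ᵥ φ z + ψ z ⬝ᵥ deriv φ z) z :=
      fun z => hasDerivAt_dot (hψd z) (hφd z)
    have hintc : Continuous fun z => (P₁ *ᵥ deriv Ψ z) ⬝ᵥ φ z + ψ z ⬝ᵥ deriv φ z :=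
      ((continuous_const.matrix_mulVec hΨ'c).dotProduct hφc).add
        (hψc.dotProduct hφ'c)
    have hftc : (∫ z in (0 : ℝ)..L, ((P₁ *ᵥ deriv Ψ z) ⬝ᵥ φ z + ψ z ⬝ᵥ deriv φ z))
        = ψ L ⬝ᵥ φ L - ψ 0 ⬝ᵥ φ 0 :=
      intervalIntegral.integral_eq_sub_of_hasDerivAt (fun z _ => hder z)
        (hintc.intervalIntegrable 0 L)
    have eψ : ∀ z (w : Fin n → ℝ), ψ z ⬝ᵥ w = Ψ z ⬝ᵥ P₁ *ᵥ w := by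
      intro z w
      rw [hψdef, dot_shift, hP₁.eq]
    have hbd : ψ L ⬝ᵥ φ L - ψ 0 ⬝ᵥ φ 0 = 0 := by
      rw [eψ, eψ]
      exact hiv t
    have hBφc : Continuous fun z => (B z)ᵀ *ᵥ φ z :=
      (continuous_matrix fun i j => hB j i).matrix_mulVec hφc
    have hGc : Continuous fun z => Γ ⬝ᵥ Bc *ᵥ ((B z)ᵀ *ᵥ φ z) :=
      continuous_const.dotProduct (continuous_const.matrix_mulVec hBφc)
    have hpt : ∀ z ∈ Set.uIcc (0 : ℝ) L, Ψ z ⬝ᵥ Dt t z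
        = ((P₁ *ᵥ deriv Ψ z) ⬝ᵥ φ z + ψ z ⬝ᵥ deriv φ z)
          - Γ ⬝ᵥ Bc *ᵥ ((B z)ᵀ *ᵥ φ z) := by
      intro z hz
      rw [Set.uIcc_of_le hL.le] at hz
      rw [hDteq t z hz, dotProduct_add, dotProduct_add]
      have hii' : P₁ *ᵥ deriv Ψ z = (B z * Bcᵀ) *ᵥ Γ - (P₀ + G₀) *ᵥ Ψ z := by
        have h0 := hii z hz
        rw [sub_eq_zero] at h0
        exact eq_sub_of_add_eq h0
      have hA : Ψ z ⬝ᵥ P₁ *ᵥ deriv φ z = ψ z ⬝ᵥ deriv φ z := (eψ z _).symm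
      have hCc : Ψ z ⬝ᵥ B z *ᵥ u t = 0 := by
        rw [hu, Matrix.dotProduct_mulVec, ← Matrix.mulVec_transpose,
          dotProduct_neg, Matrix.dotProduct_mulVec, ← Matrix.mulVec_transpose,
          Matrix.transpose_transpose]
        rw [dotProduct_comm, hiii z hz]
        simp
      have hB2 : Ψ z ⬝ᵥ (P₀ - G₀) *ᵥ φ z
          = (P₁ *ᵥ deriv Ψ z) ⬝ᵥ φ z - Γ ⬝ᵥ Bc *ᵥ ((B z)ᵀ *ᵥ φ z) := by
        rw [hii', Matrix.sub_mulVec, sub_dotProduct]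
        have e1 : (B z * Bcᵀ) *ᵥ Γ ⬝ᵥ φ z = Γ ⬝ᵥ Bc *ᵥ ((B z)ᵀ *ᵥ φ z) := by
          rw [dot_shift, Matrix.transpose_mul, Matrix.transpose_transpose,
            ← Matrix.mulVec_mulVec]
        have e2 : (P₀ + G₀) *ᵥ Ψ z ⬝ᵥ φ z = -(Ψ z ⬝ᵥ (P₀ - G₀) *ᵥ φ z) := by
          rw [dot_shift, Matrix.transpose_add, hP₀, hG₀T]
          have hM : -P₀ + G₀ = -(P₀ - G₀) := by abel
          rw [hM, Matrix.neg_mulVec, dotProduct_neg]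
        rw [e1, e2, Matrix.sub_mulVec]
        ring
      rw [hA, hCc, hB2]
      ring
    rw [intervalIntegral.integral_congr hpt,
      intervalIntegral.integral_sub (hintc.intervalIntegrable 0 L)
        (hGc.intervalIntegrable 0 L), hftc, hbd, zero_sub, neg_inj]
    -- ∫ Γ ⬝ᵥ Bc *ᵥ ((B z)ᵀ *ᵥ φ z) = Γ ⬝ᵥ Bc *ᵥ uc t
    have hTlin : IsLinearMap ℝ fun v : Fin m → ℝ => Γ ⬝ᵥ Bc *ᵥ v := by
      constructor
      · intro a b; rw [Matrix.mulVec_add, dotProduct_add]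
      · intro c a; rw [Matrix.mulVec_smul, dotProduct_smul]
    set T : (Fin m → ℝ) →L[ℝ] ℝ := LinearMap.toContinuousLinearMap hTlin.mk' with hT
    have hTa : ∀ v, T v = Γ ⬝ᵥ Bc *ᵥ v := fun v => rfl
    calc (∫ z in (0 : ℝ)..L, Γ ⬝ᵥ Bc *ᵥ ((B z)ᵀ *ᵥ φ z))
        = ∫ z in (0 : ℝ)..L, T ((B z)ᵀ *ᵥ φ z) := by simp [hTa]
      _ = T (∫ z in (0 : ℝ)..L, (B z)ᵀ *ᵥ φ z) :=
          ContinuousLinearMap.intervalIntegral_comp_comm T (hBφc.intervalIntegrable 0 L)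
      _ = Γ ⬝ᵥ Bc *ᵥ uc t := by rw [hTa, huc t]
  -- derivative of controller term
  have hc1 : ∀ t : ℝ, HasDerivAt (fun x => Γ ⬝ᵥ vc x) (Γ ⬝ᵥ Bc *ᵥ uc t) t := by
    intro t
    have h0 := hasDerivAt_dotConst Γ (hctrl t)
    have he : Γ ⬝ᵥ ((Ac - Sc) *ᵥ (Qc *ᵥ vc t) + Bc *ᵥ uc t) = Γ ⬝ᵥ Bc *ᵥ uc t := by
      rw [dotProduct_add, Matrix.dotProduct_mulVec, ← Matrix.mulVec_transpose]
      have h2 : (Ac - Sc)ᵀ = -(Ac + Sc) := by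
        rw [Matrix.transpose_sub, hAc, hScT]; abel
      rw [h2, Matrix.neg_mulVec, hi]
      simp
    rw [← he]; exact h0
  have key : ∀ t : ℝ, HasDerivAt
      (fun x => Γ ⬝ᵥ vc x + ∫ z in (0 : ℝ)..L, Ψ z ⬝ᵥ χ x z) 0 t := by
    intro t
    have := (hc1 t).fun_add (hi1 t)
    rw [hi2 t] at this
    simpa using this
  have hconst : ∀ x y : ℝ, (fun x => Γ ⬝ᵥ vc x + ∫ z in (0 : ℝ)..L, Ψ z ⬝ᵥ χ x z) x
      = (fun x => Γ ⬝ᵥ vc x + ∫ z in (0 : ℝ)..L, Ψ z ⬝ᵥ χ x z) y :=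
    is_const_of_deriv_eq_zero (fun t => (key t).differentiableAt) fun t => (key t).deriv
  intro t₁ t₂
  rw [hC t₁, hC t₂]
  exact hconst t₁ t₂
end

section
/- Let L > 0, ρ > 0, T > 0 be constants, g : [0,L] → ℝ continuous, and u : ℝ → ℝ continuous. Suppose w : ℝ × [0,L] → ℝ is twice continuously differentiable and, with p := ρ ∂_t w, satisfies ∂_t p(z,t) = T ∂_z² w(z,t) + g(z)u(t) for all (z,t), together with the boundary conditions w(0,t) = 0 and ∂_z w(L,t) = 0 for all t. Define the Hamiltonian H(t) := ∫₀ᴸ ( p(z,t)²/(2ρ) + (T/2)(∂_z w(z,t))² ) dz. Then H is differentiable and dH/dt = u(t) · ∫₀ᴸ g(z) p(z,t)/ρ dz for all t. -/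
open MeasureTheory Set intervalIntegral


set_option maxHeartbeats 1000000 in
/-- Energy balance for the in-domain actuated vibrating string
`ρ ∂_t² w = T ∂_z² w + g(z)u(t)`, clamped at `z = 0` and free at `z = L`:
`dH/dt = u(t)·∫₀ᴸ g p/ρ dz` for `H = ∫₀ᴸ (p²/(2ρ) + (T/2)(∂_z w)²) dz`. -/
theorem stmt_6 (L ρ T : ℝ) (hL : 0 < L) (hρ : 0 < ρ) (hT : 0 < T)
    (g : ℝ → ℝ) (hg : ContinuousOn g (Set.Icc 0 L))
    (u : ℝ → ℝ) (hu : Continuous u)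
    (w : ℝ → ℝ → ℝ)                -- w t z : deflection at time t, place z
    (hw : ContDiff ℝ 2 (Function.uncurry w))
    (p : ℝ → ℝ → ℝ)                -- generalized momentum p = ρ ∂_t w
    (hp : ∀ t z, p t z = ρ * deriv (fun τ => w τ z) t)
    (hpde : ∀ t : ℝ, ∀ z ∈ Set.Icc (0 : ℝ) L,
      HasDerivAt (fun τ => p τ z)
        (T * deriv (deriv fun ζ => w t ζ) z + g z * u t) t)
    (hbc0 : ∀ t : ℝ, w t 0 = 0)
    (hbcL : ∀ t : ℝ, deriv (fun ζ => w t ζ) L = 0)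
    (H : ℝ → ℝ)
    (hH : ∀ t, H t = ∫ z in (0 : ℝ)..L,
      (p t z) ^ 2 / (2 * ρ) + T / 2 * (deriv (fun ζ => w t ζ) z) ^ 2) :
    ∀ t : ℝ, HasDerivAt H (u t * ∫ z in (0 : ℝ)..L, g z * p t z / ρ) t := by
  have hρ' : ρ ≠ 0 := hρ.ne'
  set f := Function.uncurry w with hfdef
  have hfd : Differentiable ℝ f := hw.differentiable two_ne_zero
  have hf1 : ContDiff ℝ 1 (fderiv ℝ f) := hw.fderiv_right (by norm_num)
  set A : ℝ × ℝ → ℝ := fun q => fderiv ℝ f q (1, 0) with hAdef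
  set B : ℝ × ℝ → ℝ := fun q => fderiv ℝ f q (0, 1) with hBdef
  have hA : ContDiff ℝ 1 A := hf1.clm_apply contDiff_const
  have hB : ContDiff ℝ 1 B := hf1.clm_apply contDiff_const
  set C : ℝ × ℝ → ℝ := fun q => fderiv ℝ B q (0, 1) with hCdef
  set D : ℝ × ℝ → ℝ := fun q => fderiv ℝ A q (0, 1) with hDdef
  have hCc : Continuous C := ((hB.fderiv_right (m := 0) (by norm_num)).clm_apply contDiff_const).continuous
  have hDc : Continuous D := ((hA.fderiv_right (m := 0) (by norm_num)).clm_apply contDiff_const).continuous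
  -- derivatives along lines
  have hlinT : ∀ t z : ℝ, HasDerivAt (fun τ => w τ z) (A (t, z)) t := by
    intro t z
    have h1 : HasDerivAt (fun τ : ℝ => (τ, z)) ((1 : ℝ), (0 : ℝ)) t :=
      (hasDerivAt_id t).prodMk (hasDerivAt_const t z)
    have h2 := ((hfd (t, z)).hasFDerivAt).comp_hasDerivAt t h1
    simpa [hfdef, Function.uncurry, Function.comp_def, hAdef] using h2
  have hlinZ : ∀ t z : ℝ, HasDerivAt (fun ζ => w t ζ) (B (t, z)) z := by
    intro t z
    have h1 : HasDerivAt (fun ζ : ℝ => (t, ζ)) ((0 : ℝ), (1 : ℝ)) z :=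
      (hasDerivAt_const z t).prodMk (hasDerivAt_id z)
    have h2 := ((hfd (t, z)).hasFDerivAt).comp_hasDerivAt z h1
    simpa [hfdef, Function.uncurry, Function.comp_def, hBdef] using h2
  have hAz : ∀ t z : ℝ, HasDerivAt (fun ζ => A (t, ζ)) (D (t, z)) z := by
    intro t z
    have h1 : HasDerivAt (fun ζ : ℝ => (t, ζ)) ((0 : ℝ), (1 : ℝ)) z :=
      (hasDerivAt_const z t).prodMk (hasDerivAt_id z)
    have h2 := ((hA.differentiable one_ne_zero (t, z)).hasFDerivAt).comp_hasDerivAt z h1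
    simpa [Function.comp_def, hDdef] using h2
  have hBz : ∀ t z : ℝ, HasDerivAt (fun ζ => B (t, ζ)) (C (t, z)) z := by
    intro t z
    have h1 : HasDerivAt (fun ζ : ℝ => (t, ζ)) ((0 : ℝ), (1 : ℝ)) z :=
      (hasDerivAt_const z t).prodMk (hasDerivAt_id z)
    have h2 := ((hB.differentiable one_ne_zero (t, z)).hasFDerivAt).comp_hasDerivAt z h1
    simpa [Function.comp_def, hCdef] using h2
  -- Schwarz symmetry: ∂ₜ B = D
  have hsym : ∀ q : ℝ × ℝ, fderiv ℝ B q (1, 0) = D q := by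
    intro q
    have hq : HasFDerivAt (fderiv ℝ f) (fderiv ℝ (fderiv ℝ f) q) q :=
      (hf1.differentiable one_ne_zero q).hasFDerivAt
    have hBq : HasFDerivAt B
        ((ContinuousLinearMap.apply ℝ ℝ ((0 : ℝ), (1 : ℝ))).comp
          (fderiv ℝ (fderiv ℝ f) q)) q :=
      (ContinuousLinearMap.apply ℝ ℝ ((0 : ℝ), (1 : ℝ))).hasFDerivAt.comp q hq
    have hAq : HasFDerivAt A
        ((ContinuousLinearMap.apply ℝ ℝ ((1 : ℝ), (0 : ℝ))).comp
          (fderiv ℝ (fderiv ℝ f) q)) q :=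
      (ContinuousLinearMap.apply ℝ ℝ ((1 : ℝ), (0 : ℝ))).hasFDerivAt.comp q hq
    have e1 : fderiv ℝ B q (1, 0) = fderiv ℝ (fderiv ℝ f) q (1, 0) (0, 1) := by
      rw [hBq.fderiv]; rfl
    have e2 : D q = fderiv ℝ (fderiv ℝ f) q (0, 1) (1, 0) := by
      show fderiv ℝ A q (0, 1) = _
      rw [hAq.fderiv]; rfl
    rw [e1, e2]
    exact second_derivative_symmetric (fun y => (hfd y).hasFDerivAt) hq _ _
  have hBt : ∀ t z : ℝ, HasDerivAt (fun τ => B (τ, z)) (D (t, z)) t := by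
    intro t z
    have h1 : HasDerivAt (fun τ : ℝ => (τ, z)) ((1 : ℝ), (0 : ℝ)) t :=
      (hasDerivAt_id t).prodMk (hasDerivAt_const t z)
    have h2 := ((hB.differentiable one_ne_zero (t, z)).hasFDerivAt).comp_hasDerivAt t h1
    rw [← hsym (t, z)]
    simpa [Function.comp_def] using h2
  have hderivZ : ∀ t z : ℝ, deriv (fun ζ => w t ζ) z = B (t, z) := fun t z => (hlinZ t z).deriv
  have hpA : ∀ t z, p t z = ρ * A (t, z) := by
    intro t z; rw [hp t z, (hlinT t z).deriv]
  have hpde' : ∀ t : ℝ, ∀ z ∈ Set.Icc (0 : ℝ) L,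
      HasDerivAt (fun τ => p τ z) (T * C (t, z) + g z * u t) t := by
    intro t z hz
    have h0 := hpde t z hz
    have e : deriv (deriv fun ζ => w t ζ) z = C (t, z) := by
      have e2 : (deriv fun ζ => w t ζ) = fun ζ => B (t, ζ) := funext fun ζ => (hlinZ t ζ).deriv
      rw [e2, (hBz t z).deriv]
    rwa [e] at h0
  have hp0 : ∀ t, p t 0 = 0 := by
    intro t
    have e : (fun τ => w τ 0) = fun _ : ℝ => (0 : ℝ) := funext fun τ => hbc0 τ
    rw [hp, e, deriv_const]; ring
  have hBL : ∀ t, B (t, L) = 0 := fun t => (hderivZ t L) ▸ hbcL t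
  -- main proof
  intro t₀
  -- step 1: differentiate under the integral
  set F : ℝ → ℝ → ℝ := fun x z => p x z ^ 2 / (2 * ρ) + T / 2 * (B (x, z)) ^ 2 with hFdef
  set F' : ℝ → ℝ → ℝ := fun x z =>
    p x z * (T * C (x, z) + g z * u x) / ρ + T * (B (x, z) * D (x, z)) with hF'def
  have hPc : Continuous fun q : ℝ × ℝ => p q.1 q.2 := by
    have e : (fun q : ℝ × ℝ => p q.1 q.2) = fun q : ℝ × ℝ => ρ * A q := by
      funext q; rw [hpA]
    rw [e]; exact continuous_const.mul hA.continuous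
  have hF'cont : ContinuousOn (fun q : ℝ × ℝ => F' q.1 q.2) (univ ×ˢ Icc (0 : ℝ) L) := by
    have hgc : ContinuousOn (fun q : ℝ × ℝ => g q.2) (univ ×ˢ Icc (0 : ℝ) L) :=
      hg.comp continuous_snd.continuousOn (fun q hq => hq.2)
    simp only [hF'def]
    exact ((hPc.continuousOn.mul
        ((continuous_const.mul hCc).continuousOn.add
          (hgc.mul (hu.comp continuous_fst).continuousOn))).div_const ρ).add
      (continuous_const.mul (hB.continuous.mul hDc)).continuousOn
  obtain ⟨M, hM⟩ := (isCompact_Icc.prod isCompact_Icc :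
      IsCompact (Icc (t₀ - 1) (t₀ + 1) ×ˢ Icc (0 : ℝ) L)).exists_bound_of_continuousOn
    (hF'cont.mono (by intro q hq; exact ⟨trivial, hq.2⟩))
  have hsub : Set.uIoc (0 : ℝ) L ⊆ Icc (0 : ℝ) L := by
    rw [Set.uIoc_of_le hL.le]; exact Set.Ioc_subset_Icc_self
  have key := intervalIntegral.hasDerivAt_integral_of_dominated_loc_of_deriv_le
    (F := F) (F' := F') (a := (0 : ℝ)) (b := L) (x₀ := t₀) (bound := fun _ => M)
    (μ := volume) (Metric.ball_mem_nhds t₀ one_pos)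
    (Filter.Eventually.of_forall fun x => by
      have : Continuous (F x) := by
        simp only [hFdef]
        exact (((hPc.comp (continuous_const.prodMk continuous_id)).pow 2).div_const _).add
          (continuous_const.mul ((hB.continuous.comp
            (continuous_const.prodMk continuous_id)).pow 2))
      exact this.aestronglyMeasurable.restrict)
    (by
      apply Continuous.intervalIntegrable
      simp only [hFdef]
      exact (((hPc.comp (continuous_const.prodMk continuous_id)).pow 2).div_const _).add
        (continuous_const.mul ((hB.continuous.comp
          (continuous_const.prodMk continuous_id)).pow 2)))
    (by
      apply ContinuousOn.aestronglyMeasurable _ measurableSet_uIoc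
      have := (hF'cont.comp (Continuous.continuousOn (continuous_const.prodMk continuous_id) :
        ContinuousOn (fun z : ℝ => (t₀, z)) (Set.uIoc 0 L)) (fun z hz => ⟨trivial, hsub hz⟩))
      exact this)
    (Filter.Eventually.of_forall fun z hz x hx => by
      have hxI : x ∈ Icc (t₀ - 1) (t₀ + 1) := by
        have := mem_ball_iff_norm.mp hx
        rw [Real.norm_eq_abs, abs_lt] at this
        constructor <;> linarith [this.1, this.2]
      exact hM (x, z) ⟨hxI, hsub hz⟩)
    intervalIntegrable_const
    (Filter.Eventually.of_forall fun z hz x hx => by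
      have hzI := hsub hz
      have h1 := (hpde' x z hzI).pow 2
      have h2 := h1.div_const (2 * ρ)
      have h3 := ((hBt x z).pow 2).const_mul (T / 2)
      have h4 := h2.add h3
      simp only [hFdef, hF'def]
      refine h4.congr_deriv ?_
      simp only [Nat.cast_ofNat, show (2:ℕ) - 1 = 1 from rfl, pow_one]
      ring)
  -- step 2: integrate by parts
  have hsplit : ∀ z, F' t₀ z = u t₀ * (g z * p t₀ z / ρ)
      + T * (D (t₀, z) * B (t₀, z) + p t₀ z / ρ * C (t₀, z)) := by
    intro z; simp only [hF'def]; field_simp; ring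
  have hI1 : IntervalIntegrable (fun z => u t₀ * (g z * p t₀ z / ρ)) volume 0 L := by
    apply ContinuousOn.intervalIntegrable
    rw [Set.uIcc_of_le hL.le]
    exact continuousOn_const.mul ((hg.mul
      ((hPc.comp (continuous_const.prodMk continuous_id)).continuousOn)).div_const ρ)
  have hI2 : IntervalIntegrable
      (fun z => T * (D (t₀, z) * B (t₀, z) + p t₀ z / ρ * C (t₀, z))) volume 0 L := by
    apply Continuous.intervalIntegrable
    exact continuous_const.mul
      (((hDc.comp (continuous_const.prodMk continuous_id)).mul
        (hB.continuous.comp (continuous_const.prodMk continuous_id))).add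
       (((hPc.comp (continuous_const.prodMk continuous_id)).div_const ρ).mul
        (hCc.comp (continuous_const.prodMk continuous_id))))
  have hG : ∀ z : ℝ, HasDerivAt (fun ζ => T * (p t₀ ζ / ρ * B (t₀, ζ)))
      (T * (D (t₀, z) * B (t₀, z) + p t₀ z / ρ * C (t₀, z))) z := by
    intro z
    have h1 : HasDerivAt (fun ζ => p t₀ ζ / ρ) (D (t₀, z)) z := by
      have e : (fun ζ => p t₀ ζ / ρ) = fun ζ => ρ * A (t₀, ζ) / ρ := by
        funext ζ; rw [hpA]
      rw [e]
      have h := ((hAz t₀ z).const_mul ρ).div_const ρ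
      rwa [mul_div_cancel_left₀ _ hρ'] at h
    exact (h1.mul (hBz t₀ z)).const_mul T
  have hFTC : (∫ z in (0 : ℝ)..L, T * (D (t₀, z) * B (t₀, z) + p t₀ z / ρ * C (t₀, z))) = 0 := by
    rw [intervalIntegral.integral_eq_sub_of_hasDerivAt (fun z _ => hG z) hI2]
    rw [hBL t₀, hp0 t₀]
    ring
  have hint : (∫ z in (0 : ℝ)..L, F' t₀ z)
      = u t₀ * ∫ z in (0 : ℝ)..L, g z * p t₀ z / ρ := by
    rw [intervalIntegral.integral_congr (g := fun z => u t₀ * (g z * p t₀ z / ρ)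
      + T * (D (t₀, z) * B (t₀, z) + p t₀ z / ρ * C (t₀, z))) (fun z _ => hsplit z)]
    rw [intervalIntegral.integral_add hI1 hI2, hFTC, add_zero,
      intervalIntegral.integral_const_mul]
  have hHeq : H = fun x => ∫ z in (0 : ℝ)..L, F x z := by
    funext x
    rw [hH x]
    simp only [hFdef, hderivZ]
  rw [hHeq, ← hint]
  exact key.2
end

section
/- (Equivalence of the two in-domain control laws for the string.) Let L > 0, and let g : [0,L] → ℝ be integrable; define Ψ₁(z) := −∫_zᴸ g(s) ds. Let w, w^d : [0,L] → ℝ be continuously differentiable with w(0) = w^d(0) = 0, and set q := w' and q^d := (w^d)'. Then for all constants c₁, c₂, u_s, ȳ ∈ ℝ, the control law obtained in the Stokes–Dirac framework, u_SD := −c₁( −∫₀ᴸ Ψ₁ q dz + ∫₀ᴸ Ψ₁ q^d dz ) − c₂ ȳ + u_s, equals the control law obtained in the jet-bundle framework, u_JB := −c₁( ∫₀ᴸ g w dz − ∫₀ᴸ g w^d dz ) − c₂ ȳ + u_s. -/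
open MeasureTheory Set

private lemma fubini_key (L : ℝ) (hL : 0 < L) (g q : ℝ → ℝ)
    (hg : IntervalIntegrable g volume 0 L) (hqc : Continuous q) :
    ∫ z in (0:ℝ)..L, (∫ s in z..L, g s) * q z
      = ∫ s in (0:ℝ)..L, g s * (∫ z in (0:ℝ)..s, q z) := by
  set μ := volume.restrict (Ioc (0:ℝ) L) with hμ
  have hgI : Integrable g μ :=
    (intervalIntegrable_iff_integrableOn_Ioc_of_le hL.le).mp hg
  have hqI : Integrable q μ := hqc.integrableOn_Ioc
  set F : ℝ × ℝ → ℝ := {p : ℝ × ℝ | p.2 ≤ p.1}.indicator (fun p => g p.1 * q p.2) with hF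
  have hmeas : MeasurableSet {p : ℝ × ℝ | p.2 ≤ p.1} :=
    measurableSet_le measurable_snd measurable_fst
  have hFI : Integrable F (μ.prod μ) := (hgI.mul_prod hqI).indicator hmeas
  have swap : ∫ s, (∫ z, F (s, z) ∂μ) ∂μ = ∫ z, (∫ s, F (s, z) ∂μ) ∂μ :=
    MeasureTheory.integral_integral_swap hFI
  -- inner integral in z, for s ∈ Ioc 0 L
  have h1 : ∀ s ∈ Ioc (0:ℝ) L,
      (∫ z, F (s, z) ∂μ) = g s * ∫ z in (0:ℝ)..s, q z := by
    intro s hs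
    have : (fun z => F (s, z)) = (Iic s).indicator (fun z => g s * q z) := by
      funext z
      by_cases h : z ≤ s <;> simp [hF, Set.indicator, h]
    rw [this, integral_indicator measurableSet_Iic, hμ,
      Measure.restrict_restrict measurableSet_Iic]
    have hset : Iic s ∩ Ioc (0:ℝ) L = Ioc 0 s := by
      ext z
      constructor
      · rintro ⟨h1, h2, _⟩; exact ⟨h2, h1⟩
      · rintro ⟨h1, h2⟩; exact ⟨h2, h1, h2.trans hs.2⟩
    rw [hset, MeasureTheory.integral_const_mul,
      intervalIntegral.integral_of_le hs.1.le]
  -- inner integral in s, for z ∈ Ioc 0 L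
  have h2 : ∀ z ∈ Ioc (0:ℝ) L,
      (∫ s, F (s, z) ∂μ) = (∫ s in z..L, g s) * q z := by
    intro z hz
    have : (fun s => F (s, z)) = (Ici z).indicator (fun s => g s * q z) := by
      funext s
      by_cases h : z ≤ s <;> simp [hF, Set.indicator, h]
    rw [this, integral_indicator measurableSet_Ici, hμ,
      Measure.restrict_restrict measurableSet_Ici]
    have hset : Ici z ∩ Ioc (0:ℝ) L = Icc z L := by
      ext s
      constructor
      · rintro ⟨h1, _, h3⟩; exact ⟨h1, h3⟩
      · rintro ⟨h1, h3⟩; exact ⟨h1, hz.1.trans_le h1, h3⟩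
    rw [hset, integral_Icc_eq_integral_Ioc, MeasureTheory.integral_mul_const,
      intervalIntegral.integral_of_le hz.2]
  calc ∫ z in (0:ℝ)..L, (∫ s in z..L, g s) * q z
      = ∫ z in Ioc (0:ℝ) L, (∫ s in z..L, g s) * q z := intervalIntegral.integral_of_le hL.le
    _ = ∫ z, (∫ s, F (s, z) ∂μ) ∂μ :=
        (setIntegral_congr_fun measurableSet_Ioc (fun z hz => (h2 z hz).symm))
    _ = ∫ s, (∫ z, F (s, z) ∂μ) ∂μ := swap.symm
    _ = ∫ s in Ioc (0:ℝ) L, g s * ∫ z in (0:ℝ)..s, q z :=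
        setIntegral_congr_fun measurableSet_Ioc h1
    _ = ∫ s in (0:ℝ)..L, g s * ∫ z in (0:ℝ)..s, q z :=
        (intervalIntegral.integral_of_le hL.le).symm

private lemma key (L : ℝ) (hL : 0 < L) (g : ℝ → ℝ)
    (hg : IntervalIntegrable g MeasureTheory.volume 0 L)
    (Ψ₁ : ℝ → ℝ) (hΨ₁ : ∀ z, Ψ₁ z = -∫ s in z..L, g s)
    (w : ℝ → ℝ) (hw : ContDiff ℝ 1 w) (hw0 : w 0 = 0)
    (q : ℝ → ℝ) (hq : ∀ z, q z = deriv w z) :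
    -(∫ z in (0:ℝ)..L, Ψ₁ z * q z) = ∫ z in (0:ℝ)..L, g z * w z := by
  have hqc : Continuous q := by
    have : Continuous (deriv w) := hw.continuous_deriv le_rfl
    rw [show q = deriv w from funext hq]; exact this
  have hwint : ∀ s : ℝ, (∫ z in (0:ℝ)..s, q z) = w s := by
    intro s
    have : (∫ z in (0:ℝ)..s, q z) = ∫ z in (0:ℝ)..s, deriv w z :=
      intervalIntegral.integral_congr fun z _ => hq z
    rw [this, intervalIntegral.integral_deriv_eq_sub
      (fun x _ => (hw.differentiable one_ne_zero).differentiableAt)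
      ((hw.continuous_deriv le_rfl).intervalIntegrable 0 s), hw0, sub_zero]
  have h1 : (∫ z in (0:ℝ)..L, Ψ₁ z * q z)
      = -∫ z in (0:ℝ)..L, (∫ s in z..L, g s) * q z := by
    rw [← intervalIntegral.integral_neg]
    exact intervalIntegral.integral_congr fun z _ => by rw [hΨ₁ z]; ring
  rw [h1, neg_neg, fubini_key L hL g q hg hqc]
  exact intervalIntegral.integral_congr fun s _ => by rw [hwint s]

/-- Equivalence of the two in-domain control laws for the string: the
Stokes–Dirac control law `u_SD = −c₁(−∫₀ᴸΨ₁q dz + ∫₀ᴸΨ₁q^d dz) − c₂ȳ + u_s`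
coincides with the jet-bundle control law
`u_JB = −c₁(∫₀ᴸ g w dz − ∫₀ᴸ g w^d dz) − c₂ȳ + u_s`. -/
theorem stmt_11 (L : ℝ) (hL : 0 < L)
    (g : ℝ → ℝ) (hg : IntervalIntegrable g MeasureTheory.volume 0 L)
    (Ψ₁ : ℝ → ℝ) (hΨ₁ : ∀ z, Ψ₁ z = -∫ s in z..L, g s)
    (w wd : ℝ → ℝ) (hw : ContDiff ℝ 1 w) (hwd : ContDiff ℝ 1 wd)
    (hw0 : w 0 = 0) (hwd0 : wd 0 = 0)
    (q qd : ℝ → ℝ) (hq : ∀ z, q z = deriv w z) (hqd : ∀ z, qd z = deriv wd z) :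
    ∀ c₁ c₂ us ybar : ℝ,
      -c₁ * (-(∫ z in (0 : ℝ)..L, Ψ₁ z * q z)
          + ∫ z in (0 : ℝ)..L, Ψ₁ z * qd z) - c₂ * ybar + us =
        -c₁ * ((∫ z in (0 : ℝ)..L, g z * w z)
          - ∫ z in (0 : ℝ)..L, g z * wd z) - c₂ * ybar + us := by
  intro c₁ c₂ us ybar
  have h1 := key L hL g hg Ψ₁ hΨ₁ w hw hw0 q hq
  have h2 := key L hL g hg Ψ₁ hΨ₁ wd hwd hwd0 qd hqd
  rw [← h1, ← h2]; ring
end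

section
/- (Casimir invariant of the controlled string, Stokes–Dirac setting.) Let L > 0, ρ > 0 be constants and g : [0,L] → ℝ integrable; define Ψ₁(z) := −∫_zᴸ g(s) ds. Suppose q, p : ℝ × [0,L] → ℝ are continuously differentiable and satisfy ∂_t q(z,t) = ∂_z( p(z,t)/ρ ) for all (z,t) with boundary condition p(0,t) = 0 for all t, and the controller state v_c : ℝ → ℝ is differentiable with dv_c/dt = ∫₀ᴸ g(z) p(z,t)/ρ dz. Then the functional C(t) := v_c(t) + ∫₀ᴸ Ψ₁(z) q(z,t) dz is constant in t. -/
open MeasureTheory Set intervalIntegral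
open scoped Interval

/-- Fubini over the triangle `0 ≤ z ≤ s ≤ L`. -/
lemma triangle_swap (L : ℝ) (hL : 0 ≤ L) (g h : ℝ → ℝ)
    (hg : IntervalIntegrable g volume 0 L) (hh : Continuous h) :
    ∫ z in (0:ℝ)..L, (∫ s in z..L, g s) * h z
      = ∫ s in (0:ℝ)..L, g s * ∫ z in (0:ℝ)..s, h z := by
  have hgI : IntegrableOn g (Ioc 0 L) volume := by
    simpa [intervalIntegrable_iff, uIoc_of_le hL] using hg
  have hhI : IntegrableOn h (Ioc 0 L) volume :=
    (hh.integrableOn_Ioc (μ := volume) (a := 0) (b := L))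
  set μ := volume.restrict (Ioc (0:ℝ) L) with hμ
  set F : ℝ × ℝ → ℝ := fun zs => if zs.1 < zs.2 then g zs.2 * h zs.1 else 0 with hF
  have hFint : Integrable F (μ.prod μ) := by
    have hbase : Integrable (fun zs : ℝ × ℝ => h zs.1 * g zs.2) (μ.prod μ) :=
      Integrable.mul_prod hhI hgI
    have : F = {zs : ℝ × ℝ | zs.1 < zs.2}.indicator (fun zs => h zs.1 * g zs.2) := by
      funext zs
      by_cases hzs : zs.1 < zs.2 <;> simp [hF, hzs, indicator_apply, mul_comm]
    rw [this]
    exact hbase.indicator (measurableSet_lt measurable_fst measurable_snd)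
  have swap : ∫ z, ∫ s, F (z, s) ∂μ ∂μ = ∫ s, ∫ z, F (z, s) ∂μ ∂μ :=
    integral_integral_swap hFint
  have left : ∀ z ∈ Ioc (0:ℝ) L,
      (∫ s, F (z, s) ∂μ) = (∫ s in z..L, g s) * h z := by
    intro z hz
    have h1 : (fun s => F (z, s)) = (Ioi z).indicator (fun s => g s * h z) := by
      funext s
      by_cases hs : z < s <;> simp [hF, hs, indicator_apply]
    rw [hμ, h1, MeasureTheory.integral_indicator measurableSet_Ioi]
    have h2 : Ioc (0:ℝ) L ∩ Ioi z = Ioc z L := by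
      ext s
      constructor
      · rintro ⟨⟨_, hsL⟩, hzs⟩; exact ⟨hzs, hsL⟩
      · rintro ⟨hzs, hsL⟩; exact ⟨⟨lt_of_le_of_lt (le_of_lt hz.1) hzs, hsL⟩, hzs⟩
    rw [Measure.restrict_restrict measurableSet_Ioi, inter_comm, h2,
      MeasureTheory.integral_mul_const, intervalIntegral.integral_of_le hz.2]
  have right : ∀ s ∈ Ioc (0:ℝ) L,
      (∫ z, F (z, s) ∂μ) = g s * ∫ z in (0:ℝ)..s, h z := by
    intro s hs
    have h1 : (fun z => F (z, s)) = (Iio s).indicator (fun z => g s * h z) := by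
      funext z
      by_cases hzles : z < s <;> simp [hF, hzles, indicator_apply]
    rw [hμ, h1, MeasureTheory.integral_indicator measurableSet_Iio]
    have h2 : Ioc (0:ℝ) L ∩ Iio s = Ioo 0 s := by
      ext z
      constructor
      · rintro ⟨⟨hz0, _⟩, hzs⟩; exact ⟨hz0, hzs⟩
      · rintro ⟨hz0, hzs⟩; exact ⟨⟨hz0, le_trans (le_of_lt hzs) hs.2⟩, hzs⟩
    rw [Measure.restrict_restrict measurableSet_Iio, inter_comm, h2,
      MeasureTheory.integral_const_mul, intervalIntegral.integral_of_le (le_of_lt hs.1),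
      integral_Ioc_eq_integral_Ioo]
  rw [intervalIntegral.integral_of_le hL, intervalIntegral.integral_of_le hL]
  calc ∫ z in Ioc (0:ℝ) L, (∫ s in z..L, g s) * h z
      = ∫ z in Ioc (0:ℝ) L, ∫ s, F (z, s) ∂μ :=
        setIntegral_congr_fun measurableSet_Ioc fun z hz => (left z hz).symm
    _ = ∫ s in Ioc (0:ℝ) L, ∫ z, F (z, s) ∂μ := swap
    _ = ∫ s in Ioc (0:ℝ) L, g s * ∫ z in (0:ℝ)..s, h z :=
        setIntegral_congr_fun measurableSet_Ioc right

/-- Casimir invariant of the controlled string (Stokes–Dirac setting): with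
`Ψ₁(z) = −∫_zᴸ g(s) ds`, `∂_t q = ∂_z(p/ρ)`, `p(0,t) = 0` and controller
dynamics `v̇_c = ∫₀ᴸ g p/ρ dz`, the functional
`C(t) = v_c(t) + ∫₀ᴸ Ψ₁ q dz` is constant in time. -/
theorem stmt_13 (L ρ : ℝ) (hL : 0 < L) (hρ : 0 < ρ)
    (g : ℝ → ℝ) (hg : IntervalIntegrable g MeasureTheory.volume 0 L)
    (Ψ₁ : ℝ → ℝ) (hΨ₁ : ∀ z, Ψ₁ z = -∫ s in z..L, g s)
    (q p : ℝ → ℝ → ℝ)              -- q t z : strain, p t z : momentum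
    (hq : ContDiff ℝ 1 (Function.uncurry q))
    (hp : ContDiff ℝ 1 (Function.uncurry p))
    (hpde : ∀ t : ℝ, ∀ z ∈ Set.Icc (0 : ℝ) L,
      HasDerivAt (fun τ => q τ z) (deriv (fun ζ => p t ζ / ρ) z) t)
    (hbc0 : ∀ t : ℝ, p t 0 = 0)
    (vc : ℝ → ℝ)
    (hvc : ∀ t : ℝ, HasDerivAt vc (∫ z in (0 : ℝ)..L, g z * p t z / ρ) t)
    (C : ℝ → ℝ)
    (hC : ∀ t, C t = vc t + ∫ z in (0 : ℝ)..L, Ψ₁ z * q t z) :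
    ∀ t₁ t₂ : ℝ, C t₁ = C t₂ := by
  have hL0 : (0:ℝ) ≤ L := hL.le
  -- smoothness of slices
  have hpz : ∀ t, ContDiff ℝ 1 (fun ζ => p t ζ) := fun t =>
    hp.comp (ContDiff.prodMk contDiff_const contDiff_id)
  have hqz : ∀ t, Continuous (fun ζ => q t ζ) := fun t =>
    hq.continuous.comp (continuous_const.prodMk continuous_id)
  have hW : ∀ t, ContDiff ℝ 1 (fun ζ => p t ζ / ρ) := fun t => (hpz t).div_const ρ
  have hWc : ∀ t, Continuous (deriv (fun ζ => p t ζ / ρ)) := fun t =>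
    (hW t).continuous_deriv le_rfl
  -- FTC in space
  have hFTC : ∀ t s, (∫ z in (0:ℝ)..s, deriv (fun ζ => p t ζ / ρ) z) = p t s / ρ := by
    intro t s
    rw [intervalIntegral.integral_deriv_eq_sub
      (fun x _ => ((hW t).differentiable one_ne_zero x))
      ((hWc t).intervalIntegrable 0 s)]
    simp [hbc0 t]
  -- spatial integration by parts via Fubini
  have hspace : ∀ t, (∫ z in (0:ℝ)..L, Ψ₁ z * deriv (fun ζ => p t ζ / ρ) z)
      = -∫ z in (0:ℝ)..L, g z * p t z / ρ := by
    intro t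
    have h1 : (∫ z in (0:ℝ)..L, Ψ₁ z * deriv (fun ζ => p t ζ / ρ) z)
        = -∫ z in (0:ℝ)..L, (∫ s in z..L, g s) * deriv (fun ζ => p t ζ / ρ) z := by
      rw [← intervalIntegral.integral_neg]
      apply intervalIntegral.integral_congr
      intro z _
      dsimp only
      rw [hΨ₁ z]; ring
    rw [h1, triangle_swap L hL0 g _ hg (hWc t), neg_inj]
    apply intervalIntegral.integral_congr
    intro s _
    dsimp only
    rw [hFTC t s]
    exact (mul_div_assoc _ _ _).symm
  -- a continuous representative of Ψ₁ on [0, L]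
  set φ : ℝ → ℝ := fun z => (∫ s in (0:ℝ)..z, g s) - ∫ s in (0:ℝ)..L, g s with hφdef
  have hφΨ : ∀ z ∈ Icc (0:ℝ) L, Ψ₁ z = φ z := by
    intro z hz
    have hadd : (∫ s in (0:ℝ)..z, g s) + (∫ s in z..L, g s) = ∫ s in (0:ℝ)..L, g s :=
      intervalIntegral.integral_add_adjacent_intervals
        (hg.mono_set (by rw [uIcc_of_le hz.1, uIcc_of_le hL0]; exact Icc_subset_Icc le_rfl hz.2))
        (hg.mono_set (by rw [uIcc_of_le hz.2, uIcc_of_le hL0]; exact Icc_subset_Icc hz.1 le_rfl))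
    show Ψ₁ z = (∫ s in (0:ℝ)..z, g s) - ∫ s in (0:ℝ)..L, g s
    rw [hΨ₁ z]
    linarith
  have hgI : IntegrableOn g (uIcc 0 L) volume := by
    rw [intervalIntegrable_iff_integrableOn_Icc_of_le hL0] at hg
    rwa [uIcc_of_le hL0]
  have hφcont : ContinuousOn φ (Icc 0 L) := by
    have h1 : ContinuousOn (fun x => ∫ s in (0:ℝ)..x, g s) (Icc 0 L) := by
      have := intervalIntegral.continuousOn_primitive_interval
        (a := (0:ℝ)) (b := L) (μ := volume) hgI
      rwa [uIcc_of_le hL0] at this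
    exact h1.sub continuousOn_const
  obtain ⟨K, hK⟩ := (isCompact_Icc (a := (0:ℝ)) (b := L)).exists_bound_of_continuousOn hφcont
  have hK0 : 0 ≤ K := le_trans (norm_nonneg _) (hK 0 (left_mem_Icc.2 hL0))
  have hΨK : ∀ z ∈ Icc (0:ℝ) L, ‖Ψ₁ z‖ ≤ K := fun z hz => (hφΨ z hz) ▸ hK z hz
  -- measurability of Ψ₁ on the interval
  have hsub : Ι (0:ℝ) L ⊆ Icc 0 L := by
    rw [uIoc_of_le hL0]; exact Ioc_subset_Icc_self
  have hΨm : AEStronglyMeasurable Ψ₁ (volume.restrict (Ι (0:ℝ) L)) := by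
    have hmeas : MeasurableSet (Ι (0:ℝ) L) := measurableSet_uIoc
    refine ((hφcont.mono hsub).aestronglyMeasurable hmeas).congr ?_
    exact (ae_restrict_iff' hmeas).2 (ae_of_all _ fun z hz => (hφΨ z (hsub hz)).symm)
  have hΨint : ∀ t, IntervalIntegrable (fun z => Ψ₁ z * q t z) volume 0 L := by
    intro t
    have h2 : IntervalIntegrable (fun z => φ z * q t z) volume 0 L := by
      apply ContinuousOn.intervalIntegrable
      rw [uIcc_of_le hL0]
      exact hφcont.mul (hqz t).continuousOn
    rw [intervalIntegrable_iff] at h2 ⊢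
    refine h2.congr ?_
    exact (ae_restrict_iff' measurableSet_uIoc).2 (ae_of_all _ fun z hz => by
      show φ z * q t z = Ψ₁ z * q t z
      rw [hφΨ z (hsub hz)])
  -- time derivative of q
  set Qt : ℝ → ℝ → ℝ := fun τ z => fderiv ℝ (Function.uncurry q) (τ, z) (1, 0) with hQtdef
  have hQt : ∀ τ z, HasDerivAt (fun τ' => q τ' z) (Qt τ z) τ := by
    intro τ z
    have h1 := (hq.differentiable one_ne_zero (τ, z)).hasFDerivAt
    have h2 : HasDerivAt (fun τ' : ℝ => ((τ', z) : ℝ × ℝ)) (1, 0) τ :=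
      (hasDerivAt_id τ).prodMk (hasDerivAt_const τ z)
    exact h1.comp_hasDerivAt τ h2
  have hQtcont : Continuous (Function.uncurry Qt) := by
    exact (hq.continuous_fderiv one_ne_zero).clm_apply continuous_const
  have hQeq : ∀ t, ∀ z ∈ Icc (0:ℝ) L, Qt t z = deriv (fun ζ => p t ζ / ρ) z :=
    fun t z hz => (hQt t z).unique (hpde t z hz)
  -- differentiation under the integral sign
  have key : ∀ t₀ : ℝ, HasDerivAt (fun t => ∫ z in (0:ℝ)..L, Ψ₁ z * q t z)
      (∫ z in (0:ℝ)..L, Ψ₁ z * Qt t₀ z) t₀ := by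
    intro t₀
    obtain ⟨M, hM⟩ := ((isCompact_Icc (a := t₀ - 1) (b := t₀ + 1)).prod
      (isCompact_Icc (a := (0:ℝ)) (b := L))).exists_bound_of_continuousOn
      hQtcont.continuousOn
    have hM0 : 0 ≤ M := le_trans (norm_nonneg _)
      (hM (t₀, 0) ⟨⟨by linarith, by linarith⟩, left_mem_Icc.2 hL0⟩)
    have hball : Metric.ball t₀ 1 ⊆ Icc (t₀ - 1) (t₀ + 1) := by
      intro x hx
      rw [Real.ball_eq_Ioo] at hx
      exact Ioo_subset_Icc_self hx
    refine (intervalIntegral.hasDerivAt_integral_of_dominated_loc_of_deriv_le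
      (F := fun t z => Ψ₁ z * q t z) (F' := fun t z => Ψ₁ z * Qt t z)
      (bound := fun _ => K * M) (Metric.ball_mem_nhds t₀ one_pos) ?_ (hΨint t₀) ?_ ?_ ?_ ?_).2
    · exact Filter.Eventually.of_forall fun x =>
        hΨm.mul ((hqz x).aestronglyMeasurable)
    · exact hΨm.mul ((hQtcont.comp (continuous_const.prodMk continuous_id)).aestronglyMeasurable)
    · refine ae_of_all _ fun z hz x hx => ?_
      rw [norm_mul]
      have h1 : ‖Ψ₁ z‖ ≤ K := hΨK z (hsub hz)
      have h2 : ‖Qt x z‖ ≤ M := hM (x, z) ⟨hball hx, hsub hz⟩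
      exact mul_le_mul h1 h2 (norm_nonneg _) hK0
    · exact intervalIntegrable_const
    · exact ae_of_all _ fun z _ x _ => (hQt x z).const_mul (Ψ₁ z)
  -- the Casimir has zero derivative
  have hCd : ∀ t, HasDerivAt C 0 t := by
    intro t
    have h3 : (∫ z in (0:ℝ)..L, Ψ₁ z * Qt t z)
        = -∫ z in (0:ℝ)..L, g z * p t z / ρ := by
      rw [← hspace t]
      apply intervalIntegral.integral_congr
      intro z hz
      rw [uIcc_of_le hL0] at hz
      dsimp only
      rw [hQeq t z hz]
    have h1 := (hvc t).add (key t)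
    rw [h3, add_neg_cancel] at h1
    have h2 : C = fun t => vc t + ∫ z in (0:ℝ)..L, Ψ₁ z * q t z := funext hC
    rw [h2]
    exact h1
  intro t₁ t₂
  exact is_const_of_deriv_eq_zero (fun t => (hCd t).differentiableAt)
    (fun t => (hCd t).deriv) t₁ t₂
end
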